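/- Let C = ⟨g_1(x)⟩ be the cyclic code of length n = p^k over R = F[u]/⟨u⁴⟩ generated by g_1(x) = u(x−1)^{r_1} + u²(x−1)^{k_4}p_4(x) + u³(x−1)^{k_5}p_5(x), where 0 ≤ k_4, k_5 < r_1 < n and p_4(x), p_5(x) are units or zero in F[x]/⟨xⁿ − 1⟩. Suppose n − r_1 + k_4 ≥ r_1. Write u³((x−1)^{n−2r_1+2k_4}p_4(x)² − (x−1)^{n−r_1+k_5}p_5(x)) = u³(x−1)^{τ_1}·h̃_1(x) with h̃_1(x) a unit or zero in F[x]/⟨xⁿ − 1⟩ and τ_1 ≥ 0. Then the third torsional degree of C is t_3 = min{r_1, τ_1} if h̃_1(x) is a unit, and t_3 = r_1 if h̃_1(x) = 0. -/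

import Mathlib

open Polynomial
open scoped Classical

noncomputable section

/-- The ring `R = F[u]/⟨u⁴⟩`. -/
abbrev Rq (F : Type) [Field F] : Type :=
  Polynomial F ⧸ Ideal.span ({X ^ 4} : Set (Polynomial F))

instance instCommRingRq (F : Type) [Field F] : CommRing (Rq F) :=
  Ideal.Quotient.commRing _

/-- The ring `S = R[x]/⟨xⁿ − 1⟩`. -/
abbrev Sq (F : Type) [Field F] (n : ℕ) : Type :=
  Polynomial (Rq F) ⧸ Ideal.span ({X ^ n - 1} : Set (Polynomial (Rq F)))

/-- The ring `Q = F[x]/⟨xⁿ − 1⟩`. -/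
abbrev Qq (F : Type) [Field F] (n : ℕ) : Type :=
  Polynomial F ⧸ Ideal.span ({X ^ n - 1} : Set (Polynomial F))

/-- The element `u` of `R`. -/
def uu (F : Type) [Field F] : Rq F := Ideal.Quotient.mk _ X

/-- The element `u` of `S`. -/
def uS (F : Type) [Field F] (n : ℕ) : Sq F n := Ideal.Quotient.mk _ (C (uu F))

/-- The element `x` of `S`. -/
def xS (F : Type) [Field F] (n : ℕ) : Sq F n := Ideal.Quotient.mk _ X

/-- The element `x` of `Q`. -/
def xQ (F : Type) [Field F] (n : ℕ) : Qq F n := Ideal.Quotient.mk _ X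

/-- Reduction `R → F` modulo `u`. -/
def resHom (F : Type) [Field F] : Rq F →+* F :=
  Ideal.Quotient.lift _ (evalRingHom 0) (by
    intro a ha
    rw [Ideal.mem_span_singleton] at ha
    obtain ⟨c, rfl⟩ := ha
    simp)

/-- Reduction `μ : S → Q` modulo `u`. -/
def muHom (F : Type) [Field F] (n : ℕ) : Sq F n →+* Qq F n :=
  Ideal.Quotient.lift _ ((Ideal.Quotient.mk _).comp (mapRingHom (resHom F))) (by
    intro a ha
    rw [Ideal.mem_span_singleton] at ha
    obtain ⟨c, rfl⟩ := ha
    rw [RingHom.comp_apply, map_mul, Ideal.Quotient.eq_zero_iff_mem]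
    apply Ideal.mul_mem_right
    have h : (mapRingHom (resHom F)) (X ^ n - 1 : Polynomial (Rq F))
        = (X ^ n - 1 : Polynomial F) := by simp
    rw [h]
    exact Ideal.subset_span rfl)

/-- The natural lift `Q → S` (sending `a ∈ F` to itself and `x ↦ x`). -/
def liftQS (F : Type) [Field F] (n : ℕ) : Qq F n →+* Sq F n :=
  Ideal.Quotient.lift _
    ((Ideal.Quotient.mk _).comp
      (mapRingHom ((Ideal.Quotient.mk _).comp (C : F →+* Polynomial F)))) (by
    intro a ha
    rw [Ideal.mem_span_singleton] at ha
    obtain ⟨c, rfl⟩ := ha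
    rw [RingHom.comp_apply, map_mul, Ideal.Quotient.eq_zero_iff_mem]
    apply Ideal.mul_mem_right
    have h : (mapRingHom ((Ideal.Quotient.mk (Ideal.span ({X ^ 4} : Set (Polynomial F)))).comp
        (C : F →+* Polynomial F))) (X ^ n - 1 : Polynomial F)
        = (X ^ n - 1 : Polynomial (Rq F)) := by simp
    rw [h]
    exact Ideal.subset_span rfl)

/-- The `i`-th torsion code `Tor_i(C) = {μ(g) : uⁱ·g ∈ C}`, as a subset of `Q`. -/
def TorSet (F : Type) [Field F] (n : ℕ) (i : ℕ) (Cc : Ideal (Sq F n)) : Set (Qq F n) :=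
  { a | ∃ g : Sq F n, (uS F n) ^ i * g ∈ Cc ∧ muHom F n g = a }

/-- The code `C` has `i`-th torsional degree `t`, i.e. `Tor_i(C) = ⟨(x−1)^t⟩` with `0 ≤ t ≤ n`. -/
def HasTorDeg (F : Type) [Field F] (n : ℕ) (i : ℕ) (Cc : Ideal (Sq F n)) (t : ℕ) : Prop :=
  t ≤ n ∧ TorSet F n i Cc = ↑(Ideal.span {(xQ F n - 1) ^ t})

/-- An element of `S` that is the lift of a unit of `Q = F[x]/⟨xⁿ−1⟩`. -/
def IsUnitLift (F : Type) [Field F] (n : ℕ) (a : Sq F n) : Prop :=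
  ∃ q : Qq F n, IsUnit q ∧ a = liftQS F n q

/-- An element of `S` that is zero or the lift of a unit of `Q = F[x]/⟨xⁿ−1⟩`. -/
def UnitOrZeroLift (F : Type) [Field F] (n : ℕ) (a : Sq F n) : Prop :=
  a = 0 ∨ IsUnitLift F n a


variable {F : Type} [Field F] {n : ℕ}

lemma mu_lift (q : Qq F n) : muHom F n (liftQS F n q) = q := by
  obtain ⟨f, rfl⟩ := Ideal.Quotient.mk_surjective q
  simp only [liftQS, muHom, Ideal.Quotient.lift_mk, RingHom.comp_apply, Ideal.Quotient.lift_mk]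
  rw [coe_mapRingHom, coe_mapRingHom, map_map]
  congr 1
  conv_rhs => rw [← Polynomial.map_id (p := f)]
  congr 1
  ext c
  simp [resHom]

lemma lift_xQ : liftQS F n (xQ F n) = xS F n := by
  simp [liftQS, xQ, xS]

lemma lift_z : liftQS F n (xQ F n - 1) = xS F n - 1 := by
  rw [map_sub, map_one, lift_xQ]

lemma uS_pow_four : (uS F n) ^ 4 = 0 := by
  rw [uS, ← map_pow, ← map_pow, Ideal.Quotient.eq_zero_iff_mem]
  have : ((uu F) ^ 4 : Rq F) = 0 := by
    rw [uu, ← map_pow, Ideal.Quotient.eq_zero_iff_mem]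
    exact Ideal.subset_span rfl
  rw [this, map_zero]
  exact Ideal.zero_mem _

lemma mu_uS : muHom F n (uS F n) = 0 := by
  simp only [muHom, uS, Ideal.Quotient.lift_mk, RingHom.comp_apply]
  have : (mapRingHom (resHom F)) (C (uu F)) = C (resHom F (uu F)) := by simp
  rw [this]
  have : resHom F (uu F) = 0 := by simp [resHom, uu]
  rw [this, map_zero, map_zero]

-- ψ : S → T = Q[u]/(u⁴)
instance instCommRingQq (F : Type) [Field F] (n : ℕ) : CommRing (Qq F n) :=
  Ideal.Quotient.commRing _

instance instCommRingSq (F : Type) [Field F] (n : ℕ) : CommRing (Sq F n) :=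
  Ideal.Quotient.commRing _

abbrev Tq (F : Type) [Field F] (n : ℕ) : Type :=
  Polynomial (Qq F n) ⧸ Ideal.span ({X ^ 4} : Set (Polynomial (Qq F n)))

instance instCommRingTq (F : Type) [Field F] (n : ℕ) : CommRing (Tq F n) :=
  Ideal.Quotient.commRing _

def uT (F : Type) [Field F] (n : ℕ) : Tq F n := Ideal.Quotient.mk _ X

def xT (F : Type) [Field F] (n : ℕ) : Tq F n := Ideal.Quotient.mk _ (C (xQ F n))

def gammaT (F : Type) [Field F] (n : ℕ) : F →+* Tq F n :=
  ((Ideal.Quotient.mk _).comp ((C : Qq F n →+* Polynomial (Qq F n)).comp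
    ((Ideal.Quotient.mk _).comp (C : F →+* Polynomial F))))

lemma uT_pow_four (F : Type) [Field F] (n : ℕ) : (uT F n) ^ 4 = 0 := by
  rw [uT, ← map_pow, Ideal.Quotient.eq_zero_iff_mem]
  exact Ideal.subset_span rfl

def alphaT (F : Type) [Field F] (n : ℕ) : Rq F →+* Tq F n :=
  Ideal.Quotient.lift _ (eval₂RingHom (gammaT F n) (uT F n)) (by
    intro a ha
    rw [Ideal.mem_span_singleton] at ha
    obtain ⟨c, rfl⟩ := ha
    rw [map_mul]
    have : (eval₂RingHom (gammaT F n) (uT F n)) (X ^ 4 : Polynomial F) = (uT F n) ^ 4 := by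
      simp
    rw [this, uT_pow_four, zero_mul])

def psiT (F : Type) [Field F] (n : ℕ) : Sq F n →+* Tq F n :=
  Ideal.Quotient.lift _ (eval₂RingHom (alphaT F n) (xT F n)) (by
    intro a ha
    rw [Ideal.mem_span_singleton] at ha
    obtain ⟨c, rfl⟩ := ha
    rw [map_mul]
    have h1 : (eval₂RingHom (alphaT F n) (xT F n)) (X ^ n - 1 : Polynomial (Rq F))
        = (xT F n) ^ n - 1 := by simp
    have hxq : (xQ F n) ^ n = 1 := by
      have : (xQ F n) ^ n - 1 = 0 := by
        rw [xQ, ← map_pow, ← map_one (Ideal.Quotient.mk (Ideal.span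
          ({X ^ n - 1} : Set (Polynomial F)))), ← map_sub, Ideal.Quotient.eq_zero_iff_mem]
        exact Ideal.subset_span rfl
      linear_combination this
    have h2 : (xT F n) ^ n - 1 = 0 := by
      rw [xT, ← map_pow, ← map_pow, hxq, map_one, map_one, sub_self]
    rw [h1, h2, zero_mul])

lemma psi_uS : psiT F n (uS F n) = uT F n := by
  simp only [psiT, uS, Ideal.Quotient.lift_mk, coe_eval₂RingHom, eval₂_C, alphaT, uu,
    Ideal.Quotient.lift_mk]
  simp

lemma psi_lift (q : Qq F n) : psiT F n (liftQS F n q) = Ideal.Quotient.mk _ (C q) := by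
  have : (psiT F n).comp (liftQS F n) = (Ideal.Quotient.mk _).comp (C : Qq F n →+* _) := by
    apply Ideal.Quotient.ringHom_ext
    apply Polynomial.ringHom_ext
    · intro a
      simp only [RingHom.comp_apply]
      have hl : liftQS F n ((Ideal.Quotient.mk _) (C a)) =
          (Ideal.Quotient.mk _) (C ((Ideal.Quotient.mk _) (C a))) := by
        simp [liftQS]
      rw [hl]
      simp only [psiT, Ideal.Quotient.lift_mk, coe_eval₂RingHom, eval₂_C, alphaT,
        Ideal.Quotient.lift_mk]
      simp [gammaT]
    · simp only [RingHom.comp_apply]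
      have hl : liftQS F n ((Ideal.Quotient.mk _) X) = xS F n := by
        simp [liftQS, xS]
      rw [hl]
      simp only [psiT, xS, Ideal.Quotient.lift_mk, coe_eval₂RingHom, eval₂_X, xT, xQ]
  calc psiT F n (liftQS F n q) = ((psiT F n).comp (liftQS F n)) q := rfl
    _ = _ := by rw [this]; rfl

lemma low_coeff_eq_zero {A : Type} [CommRing A] (a₀ a₁ a₂ a₃ : A)
    (h : (X : Polynomial A) ^ 4 ∣ C a₀ + X * C a₁ + X ^ 2 * C a₂ + X ^ 3 * C a₃) :
    a₀ = 0 ∧ a₁ = 0 ∧ a₂ = 0 ∧ a₃ = 0 := by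
  obtain ⟨c, hc⟩ := h
  have hco : ∀ i : ℕ, i < 4 →
      ((C a₀ + X * C a₁ + X ^ 2 * C a₂ + X ^ 3 * C a₃ : Polynomial A)).coeff i
        = (X ^ 4 * c).coeff i := by
    intro i _; rw [hc]
  have key : ∀ i : ℕ, i < 4 → (X ^ 4 * c : Polynomial A).coeff i = 0 := by
    intro i hi
    rw [mul_comm, Polynomial.coeff_mul_X_pow']
    simp [Nat.not_le.mpr hi]
  have e : (C a₀ + X * C a₁ + X ^ 2 * C a₂ + X ^ 3 * C a₃ : Polynomial A)
      = C a₀ + C a₁ * X ^ 1 + C a₂ * X ^ 2 + C a₃ * X ^ 3 := by ring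
  rw [e] at hco
  refine ⟨?_, ?_, ?_, ?_⟩
  · have := hco 0 (by norm_num); rw [key 0 (by norm_num)] at this
    simpa [coeff_mul_X_pow', coeff_C] using this
  · have := hco 1 (by norm_num); rw [key 1 (by norm_num)] at this
    simpa [coeff_mul_X_pow', coeff_C] using this
  · have := hco 2 (by norm_num); rw [key 2 (by norm_num)] at this
    simpa [coeff_mul_X_pow', coeff_C] using this
  · have := hco 3 (by norm_num); rw [key 3 (by norm_num)] at this
    simpa [coeff_mul_X_pow', coeff_C] using this

/-- Injectivity of the decomposition. -/
lemma decomp_inj (a₀ a₁ a₂ a₃ : Qq F n)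
    (h : liftQS F n a₀ + uS F n * liftQS F n a₁ + uS F n ^ 2 * liftQS F n a₂
        + uS F n ^ 3 * liftQS F n a₃ = 0) :
    a₀ = 0 ∧ a₁ = 0 ∧ a₂ = 0 ∧ a₃ = 0 := by
  have := congrArg (psiT F n) h
  rw [map_zero, map_add, map_add, map_add, map_mul, map_mul, map_mul, map_pow, map_pow,
    psi_uS, psi_lift, psi_lift, psi_lift, psi_lift] at this
  rw [uT] at this
  simp only [← map_pow, ← map_mul, ← map_add] at this
  rw [Ideal.Quotient.eq_zero_iff_mem, Ideal.mem_span_singleton] at this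
  exact low_coeff_eq_zero a₀ a₁ a₂ a₃ this

lemma u3_inj (a b : Qq F n) (h : uS F n ^ 3 * liftQS F n a = uS F n ^ 3 * liftQS F n b) :
    a = b := by
  have h0 : liftQS F n 0 + uS F n * liftQS F n 0 + uS F n ^ 2 * liftQS F n 0
      + uS F n ^ 3 * liftQS F n (a - b) = 0 := by
    rw [map_sub, map_zero]
    linear_combination h
  exact sub_eq_zero.mp (decomp_inj 0 0 0 (a - b) h0).2.2.2

lemma deg_lt_four {A : Type} [CommRing A] (g : Polynomial A) (h : g.degree < 4) :
    g = C (g.coeff 0) + C (g.coeff 1) * X + C (g.coeff 2) * X ^ 2 + C (g.coeff 3) * X ^ 3 := by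
  ext i
  rcases i with _ | _ | _ | _ | i
  · simp [coeff_one]
  · simp
  · simp [coeff_X_pow]
  · simp [coeff_X_pow]
  · rw [Polynomial.coeff_eq_zero_of_degree_lt (lt_of_lt_of_le h (by
      exact_mod_cast (by omega : (4:ℕ) ≤ i + 1 + 1 + 1 + 1)))]
    simp [coeff_X_pow]

lemma rq_decomp (r : Rq F) : ∃ c₀ c₁ c₂ c₃ : F,
    r = Ideal.Quotient.mk _ (C c₀) + uu F * Ideal.Quotient.mk _ (C c₁)
      + uu F ^ 2 * Ideal.Quotient.mk _ (C c₂) + uu F ^ 3 * Ideal.Quotient.mk _ (C c₃) := by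
  obtain ⟨f, rfl⟩ := Ideal.Quotient.mk_surjective r
  have hmonic : (X ^ 4 : Polynomial F).Monic := monic_X_pow 4
  set f' := f %ₘ X ^ 4 with hf'
  have hmk : Ideal.Quotient.mk (Ideal.span ({X ^ 4} : Set (Polynomial F))) f
      = Ideal.Quotient.mk _ f' := by
    rw [Ideal.Quotient.eq]
    have : f - f' = X ^ 4 * (f /ₘ X ^ 4) := by
      conv_lhs => rw [← modByMonic_add_div f (X ^ 4)]
      ring
    rw [this]
    exact Ideal.mul_mem_right _ _ (Ideal.subset_span rfl)
  have hdeg : f'.degree < 4 := by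
    have := degree_modByMonic_lt f hmonic
    simpa [degree_X_pow] using this
  refine ⟨f'.coeff 0, f'.coeff 1, f'.coeff 2, f'.coeff 3, ?_⟩
  rw [hmk]
  conv_lhs => rw [deg_lt_four f' hdeg]
  rw [map_add, map_add, map_add, map_mul, map_mul, map_mul, map_pow, map_pow]
  rw [show (Ideal.Quotient.mk (Ideal.span ({X ^ 4} : Set (Polynomial F))) X) = uu F from rfl]
  ring

lemma mk_C_mk_C (c : F) :
    (Ideal.Quotient.mk (Ideal.span ({X ^ n - 1} : Set (Polynomial (Rq F))))
      (C (Ideal.Quotient.mk _ (C c)))) = liftQS F n (Ideal.Quotient.mk _ (C c)) := by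
  simp [liftQS]

lemma sq_decomp (s : Sq F n) : ∃ a₀ a₁ a₂ a₃ : Qq F n,
    s = liftQS F n a₀ + uS F n * liftQS F n a₁ + uS F n ^ 2 * liftQS F n a₂
      + uS F n ^ 3 * liftQS F n a₃ := by
  obtain ⟨P, rfl⟩ := Ideal.Quotient.mk_surjective s
  induction P using Polynomial.induction_on' with
  | add p q hp hq =>
    obtain ⟨a₀, a₁, a₂, a₃, ha⟩ := hp
    obtain ⟨b₀, b₁, b₂, b₃, hb⟩ := hq
    refine ⟨a₀ + b₀, a₁ + b₁, a₂ + b₂, a₃ + b₃, ?_⟩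
    rw [map_add, ha, hb, map_add, map_add, map_add, map_add]
    ring
  | monomial i r =>
    obtain ⟨c₀, c₁, c₂, c₃, hc⟩ := rq_decomp r
    have hmon : (monomial i r : Polynomial (Rq F)) = C r * X ^ i := by
      rw [C_mul_X_pow_eq_monomial]
    set φ : Rq F →+* Sq F n :=
      (Ideal.Quotient.mk (Ideal.span ({X ^ n - 1} : Set (Polynomial (Rq F))))).comp
        (C : Rq F →+* Polynomial (Rq F)) with hφ
    have hφu : φ (uu F) = uS F n := rfl
    have hφc : ∀ c : F, φ (Ideal.Quotient.mk _ (C c)) = liftQS F n (Ideal.Quotient.mk _ (C c)) :=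
      fun c => mk_C_mk_C c
    have key : Ideal.Quotient.mk (Ideal.span ({X ^ n - 1} : Set (Polynomial (Rq F))))
        ((monomial i) r) = φ r * xS F n ^ i := by
      rw [hmon, map_mul, map_pow]; rfl
    refine ⟨Ideal.Quotient.mk _ (C c₀) * xQ F n ^ i, Ideal.Quotient.mk _ (C c₁) * xQ F n ^ i,
      Ideal.Quotient.mk _ (C c₂) * xQ F n ^ i, Ideal.Quotient.mk _ (C c₃) * xQ F n ^ i, ?_⟩
    rw [key, hc, map_add, map_add, map_add, map_mul, map_mul, map_mul, map_pow, map_pow,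
      hφu, hφc, hφc, hφc, hφc]
    simp only [map_mul, map_pow, lift_xQ]
    ring

section Chain

variable {p : ℕ} [Fact p.Prime] [CharP F p] {K : ℕ}

lemma xpow_sub_one_poly : (X - 1 : Polynomial F) ^ (p ^ K) = X ^ (p ^ K) - 1 := by
  have := sub_pow_char_pow (R := Polynomial F) (X : Polynomial F) 1 K (p := p)
  simpa using this

lemma z_mk : (xQ F n - 1 : Qq F n) = Ideal.Quotient.mk _ (X - 1 : Polynomial F) := by
  rw [xQ, map_sub, map_one]

lemma z_pow_mk (t : ℕ) : (xQ F n - 1 : Qq F n) ^ t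
    = Ideal.Quotient.mk _ ((X - 1 : Polynomial F) ^ t) := by
  rw [z_mk, map_pow]

lemma zpow_n_eq_zero : (xQ F (p ^ K) - 1 : Qq F (p ^ K)) ^ (p ^ K) = 0 := by
  rw [z_pow_mk, xpow_sub_one_poly, Ideal.Quotient.eq_zero_iff_mem]
  exact Ideal.subset_span rfl

lemma zpow_hi {e : ℕ} (he : p ^ K ≤ e) : (xQ F (p ^ K) - 1 : Qq F (p ^ K)) ^ e = 0 := by
  rw [show e = p ^ K + (e - p ^ K) by omega, pow_add, zpow_n_eq_zero, zero_mul]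

lemma X_sub_one_ne : (X - 1 : Polynomial F) ≠ 0 := by
  have : (X - 1 : Polynomial F) = X - C 1 := by rw [map_one]
  rw [this]
  exact X_sub_C_ne_zero 1

lemma zpow_lt_ne_zero {t : ℕ} (ht : t < p ^ K) :
    (xQ F (p ^ K) - 1 : Qq F (p ^ K)) ^ t ≠ 0 := by
  intro h
  rw [z_pow_mk, Ideal.Quotient.eq_zero_iff_mem, Ideal.mem_span_singleton,
    ← xpow_sub_one_poly (F := F) (p := p) (K := K)] at h
  obtain ⟨c, hc⟩ := h
  have hlne : (X - 1 : Polynomial F) ^ t ≠ 0 := pow_ne_zero _ X_sub_one_ne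
  have hcne : c ≠ 0 := by
    rintro rfl
    rw [mul_zero] at hc
    exact hlne hc
  have hdeg := congrArg natDegree hc
  rw [natDegree_pow, natDegree_mul (pow_ne_zero _ X_sub_one_ne) hcne, natDegree_pow] at hdeg
  have h1 : (X - 1 : Polynomial F).natDegree = 1 := by
    have : (X - 1 : Polynomial F) = X - C 1 := by rw [map_one]
    rw [this, natDegree_X_sub_C]
  rw [h1] at hdeg
  omega

lemma ann_z {r : ℕ} (hr : r ≤ p ^ K) (a : Qq F (p ^ K))
    (h : a * (xQ F (p ^ K) - 1) ^ r = 0) :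
    ∃ b : Qq F (p ^ K), a = (xQ F (p ^ K) - 1) ^ (p ^ K - r) * b := by
  obtain ⟨f, rfl⟩ := Ideal.Quotient.mk_surjective a
  rw [z_pow_mk, ← map_mul, Ideal.Quotient.eq_zero_iff_mem, Ideal.mem_span_singleton,
    ← xpow_sub_one_poly (F := F) (p := p) (K := K)] at h
  obtain ⟨c, hc⟩ := h
  have hsplit : (X - 1 : Polynomial F) ^ (p ^ K) = (X - 1) ^ (p ^ K - r) * (X - 1) ^ r := by
    rw [← pow_add]
    congr 1
    omega
  rw [hsplit, mul_assoc, mul_comm ((X - 1 : Polynomial F) ^ r) c, ← mul_assoc] at hc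
  have hf : f = (X - 1) ^ (p ^ K - r) * c :=
    mul_right_cancel₀ (pow_ne_zero _ X_sub_one_ne) hc
  exact ⟨Ideal.Quotient.mk _ c, by rw [hf, map_mul, z_pow_mk]⟩

lemma span_z_pow_inj {t t' : ℕ} (ht : t < p ^ K) (ht' : t' ≤ p ^ K)
    (h : Ideal.span {(xQ F (p ^ K) - 1) ^ t'} = Ideal.span {(xQ F (p ^ K) - 1) ^ t}) :
    t' = t := by
  set z : Qq F (p ^ K) := xQ F (p ^ K) - 1 with hz
  have hn1 : (1 : ℕ) ≤ p ^ K := Nat.one_le_iff_ne_zero.mpr (pow_ne_zero _ (Nat.Prime.ne_zero Fact.out))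
  by_contra hne
  rcases Nat.lt_or_ge t' t with hlt | hge
  · have hmem : z ^ t' ∈ Ideal.span {z ^ t} := by
      rw [← h]
      exact Ideal.subset_span rfl
    obtain ⟨c, hc⟩ := Ideal.mem_span_singleton'.mp hmem
    have key : z ^ (p ^ K - 1) = c * z ^ (t + (p ^ K - 1 - t')) := by
      calc z ^ (p ^ K - 1) = z ^ t' * z ^ (p ^ K - 1 - t') := by
            rw [← pow_add]; congr 1; omega
        _ = c * z ^ t * z ^ (p ^ K - 1 - t') := by rw [hc]
        _ = c * z ^ (t + (p ^ K - 1 - t')) := by rw [mul_assoc, ← pow_add]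
    have e0 : z ^ (t + (p ^ K - 1 - t')) = 0 := zpow_hi (by omega)
    rw [e0, mul_zero] at key
    exact zpow_lt_ne_zero (by omega) key
  · have hlt : t < t' := by omega
    have hmem : z ^ t ∈ Ideal.span {z ^ t'} := by
      rw [h]
      exact Ideal.subset_span rfl
    obtain ⟨c, hc⟩ := Ideal.mem_span_singleton'.mp hmem
    have key : z ^ (p ^ K - 1) = c * z ^ (t' + (p ^ K - 1 - t)) := by
      calc z ^ (p ^ K - 1) = z ^ t * z ^ (p ^ K - 1 - t) := by
            rw [← pow_add]; congr 1; omega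
        _ = c * z ^ t' * z ^ (p ^ K - 1 - t) := by rw [hc]
        _ = c * z ^ (t' + (p ^ K - 1 - t)) := by rw [mul_assoc, ← pow_add]
    have e0 : z ^ (t' + (p ^ K - 1 - t)) = 0 := zpow_hi (by omega)
    rw [e0, mul_zero] at key
    exact zpow_lt_ne_zero (by omega) key

end Chain

set_option synthInstance.maxHeartbeats 1000000

def torIdeal (F : Type) [Field F] (n i : ℕ) (Cc : Ideal (Sq F n)) : Ideal (Qq F n) where
  carrier := TorSet F n i Cc
  add_mem' := by
    rintro a b ⟨g, hg, rfl⟩ ⟨g', hg', rfl⟩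
    exact ⟨g + g', by rw [mul_add]; exact Ideal.add_mem _ hg hg', map_add _ _ _⟩
  zero_mem' := ⟨0, by rw [mul_zero]; exact Ideal.zero_mem _, map_zero _⟩
  smul_mem' := by
    rintro c a ⟨g, hg, rfl⟩
    refine ⟨liftQS F n c * g, ?_, ?_⟩
    · rw [mul_left_comm]
      exact Ideal.mul_mem_left _ _ hg
    · rw [map_mul, mu_lift, smul_eq_mul]

lemma torSet_coe (n i : ℕ) (Cc : Ideal (Sq F n)) :
    TorSet F n i Cc = ↑(torIdeal F n i Cc) :=
  Set.ext fun _ => ⟨fun h => h, fun h => h⟩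

lemma mem_torIdeal {i : ℕ} {Cc : Ideal (Sq F n)} {x : Qq F n} :
    x ∈ torIdeal F n i Cc ↔ ∃ g : Sq F n, (uS F n) ^ i * g ∈ Cc ∧ muHom F n g = x :=
  ⟨fun h => h, fun h => h⟩

section Main

set_option maxHeartbeats 2000000 in
lemma torset_main {p : ℕ} [Fact p.Prime] [CharP F p] {K : ℕ}
    (r₁ k₄ k₅ τ₁ : ℕ) (hr₁ : r₁ < p ^ K) (hcase : r₁ ≤ p ^ K - r₁ + k₄)
    (q₄ q₅ hb : Qq F (p ^ K))
    (heqQ : (xQ F (p ^ K) - 1) ^ (p ^ K - r₁ + k₄ - r₁ + k₄) * q₄ ^ 2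
        - (xQ F (p ^ K) - 1) ^ (p ^ K - r₁ + k₅) * q₅ = (xQ F (p ^ K) - 1) ^ τ₁ * hb)
    (Cc : Ideal (Sq F (p ^ K)))
    (hC : Cc = Ideal.span {uS F (p ^ K) * liftQS F (p ^ K) ((xQ F (p ^ K) - 1) ^ r₁)
        + uS F (p ^ K) ^ 2 * liftQS F (p ^ K) ((xQ F (p ^ K) - 1) ^ k₄ * q₄)
        + uS F (p ^ K) ^ 3 * liftQS F (p ^ K) ((xQ F (p ^ K) - 1) ^ k₅ * q₅)}) :
    TorSet F (p ^ K) 3 Cc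
      = ↑(Ideal.span {(xQ F (p ^ K) - 1) ^ τ₁ * hb, (xQ F (p ^ K) - 1) ^ r₁}) := by
  set z : Qq F (p ^ K) := xQ F (p ^ K) - 1 with hzdef
  set L := liftQS F (p ^ K) with hL
  set u := uS F (p ^ K) with hu
  set w := p ^ K - r₁ + k₄ - r₁ with hw
  have hu4 : u ^ 4 = 0 := uS_pow_four
  have hzn : z ^ (p ^ K) = 0 := zpow_n_eq_zero
  -- Q-level facts
  have hE : z ^ (p ^ K - r₁ + k₄) = z ^ (w + r₁) := by
    congr 1
    omega
  have hA : z ^ (p ^ K - r₁) * z ^ r₁ = 0 := by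
    have h0 : z ^ (p ^ K - r₁ + r₁) = 0 := by
      rw [show p ^ K - r₁ + r₁ = p ^ K by omega]
      exact hzn
    linear_combination h0
  have hB : z ^ (p ^ K - r₁) * (z ^ k₄ * q₄) = (q₄ * z ^ w) * z ^ r₁ := by
    linear_combination q₄ * hE
  have hCkey : z ^ (p ^ K - r₁) * (z ^ k₅ * q₅) - (q₄ * z ^ w) * (z ^ k₄ * q₄)
      = -(z ^ τ₁ * hb) := by
    linear_combination -heqQ
  -- S-level facts
  have hA' : L (z ^ (p ^ K - r₁)) * L (z ^ r₁) = 0 := by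
    rw [← map_mul, hA, map_zero]
  have hB' : L (z ^ (p ^ K - r₁)) * L (z ^ k₄ * q₄) = L (q₄ * z ^ w) * L (z ^ r₁) := by
    rw [← map_mul, ← map_mul, hB]
  have hC' : L (z ^ (p ^ K - r₁)) * L (z ^ k₅ * q₅) - L (q₄ * z ^ w) * L (z ^ k₄ * q₄)
      = -(L (z ^ τ₁ * hb)) := by
    rw [← map_mul, ← map_mul, ← map_sub, hCkey, map_neg]
  have hmain : torIdeal F (p ^ K) 3 Cc = Ideal.span {z ^ τ₁ * hb, z ^ r₁} := by
    apply le_antisymm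
    · -- torIdeal ≤ span
      intro x hx
      obtain ⟨g, hg, rfl⟩ := mem_torIdeal.mp hx
      rw [hC, Ideal.mem_span_singleton'] at hg
      obtain ⟨s, hs⟩ := hg
      obtain ⟨a₀, a₁, a₂, a₃, hsd⟩ := sq_decomp s
      obtain ⟨b₀, b₁, b₂, b₃, hgd⟩ := sq_decomp g
      have hμg : muHom F (p ^ K) g = b₀ := by
        rw [hgd]
        simp [hL, hu, mu_uS, mu_lift]
      rw [hsd, hgd] at hs
      have hzero : L (0 : Qq F (p ^ K)) + u * L (a₀ * z ^ r₁)
          + u ^ 2 * L (a₀ * (z ^ k₄ * q₄) + a₁ * z ^ r₁)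
          + u ^ 3 * L (a₀ * (z ^ k₅ * q₅) + a₁ * (z ^ k₄ * q₄) + a₂ * z ^ r₁ - b₀) = 0 := by
        rw [map_zero, map_mul L a₀ (z ^ r₁), map_add, map_mul L a₀ (z ^ k₄ * q₄),
          map_mul L a₁ (z ^ r₁), map_sub, map_add, map_add,
          map_mul L a₀ (z ^ k₅ * q₅), map_mul L a₁ (z ^ k₄ * q₄), map_mul L a₂ (z ^ r₁)]
        linear_combination hs - ((L a₁ * L (z ^ k₅ * q₅) + L a₂ * L (z ^ k₄ * q₄)
          + L a₃ * L (z ^ r₁) - L b₁)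
          + u * (L a₂ * L (z ^ k₅ * q₅) + L a₃ * L (z ^ k₄ * q₄) - L b₂)
          + u ^ 2 * (L a₃ * L (z ^ k₅ * q₅) - L b₃)) * hu4
      obtain ⟨-, hE1, hE2, hE3⟩ := decomp_inj _ _ _ _ hzero
      obtain ⟨a', ha'⟩ := ann_z (le_of_lt hr₁) a₀ hE1
      have hE2' : (a₁ + a' * (q₄ * z ^ w)) * z ^ r₁ = 0 := by
        linear_combination hE2 - (z ^ k₄ * q₄) * ha' - a' * q₄ * hE
      obtain ⟨d, hd⟩ := ann_z (le_of_lt hr₁) _ hE2'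
      rw [hμg, Ideal.mem_span_pair]
      refine ⟨-a', d * (q₄ * z ^ w) + a₂, ?_⟩
      linear_combination hE3 - (z ^ k₅ * q₅) * ha' - (z ^ k₄ * q₄) * hd - a' * hCkey
        - d * q₄ * hE
    · -- span ≤ torIdeal
      rw [Ideal.span_le]
      rintro x (rfl | rfl)
      · rw [SetLike.mem_coe]
        have hneg : -(z ^ τ₁ * hb) ∈ torIdeal F (p ^ K) 3 Cc := by
          rw [mem_torIdeal]
          refine ⟨L (-(z ^ τ₁ * hb)), ?_, mu_lift _⟩
          rw [hC, Ideal.mem_span_singleton']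
          refine ⟨L (z ^ (p ^ K - r₁)) - u * L (q₄ * z ^ w), ?_⟩
          rw [map_neg]
          linear_combination u * hA' + u ^ 2 * hB' + u ^ 3 * hC'
            - (L (q₄ * z ^ w) * L (z ^ k₅ * q₅)) * hu4
        have h2 := (torIdeal F (p ^ K) 3 Cc).neg_mem hneg
        rwa [neg_neg] at h2
      · rw [SetLike.mem_coe, mem_torIdeal]
        refine ⟨L (z ^ r₁), ?_, mu_lift _⟩
        rw [hC, Ideal.mem_span_singleton']
        refine ⟨u ^ 2, ?_⟩
        linear_combination (L (z ^ k₄ * q₄) + u * L (z ^ k₅ * q₅)) * hu4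
  rw [torSet_coe, hmain]

end Main

lemma lift_mu_of_uoz {a : Sq F n} (h : UnitOrZeroLift F n a) :
    liftQS F n (muHom F n a) = a := by
  rcases h with rfl | ⟨q, -, rfl⟩
  · rw [map_zero, map_zero]
  · rw [mu_lift]

lemma span_pair_pow_unit {R : Type} [CommRing R] (z hb : R) (hbu : IsUnit hb) (r τ : ℕ) :
    Ideal.span {z ^ τ * hb, z ^ r} = Ideal.span {z ^ min r τ} := by
  apply le_antisymm
  · rw [Ideal.span_le]
    rintro x (rfl | rfl)
    · rw [SetLike.mem_coe, Ideal.mem_span_singleton]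
      exact ⟨z ^ (τ - min r τ) * hb, by
        rw [← mul_assoc, ← pow_add, show min r τ + (τ - min r τ) = τ by omega]⟩
    · rw [SetLike.mem_coe, Ideal.mem_span_singleton]
      exact ⟨z ^ (r - min r τ), by
        rw [← pow_add, show min r τ + (r - min r τ) = r by omega]⟩
  · rw [Ideal.span_le]
    rintro x rfl
    rw [SetLike.mem_coe, Ideal.mem_span_pair]
    rcases le_or_gt r τ with hle | hlt
    · refine ⟨0, 1, ?_⟩
      rw [min_eq_left hle]
      ring
    · refine ⟨↑hbu.unit⁻¹, 0, ?_⟩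
      rw [min_eq_right (le_of_lt hlt)]
      have hinv : (↑hbu.unit⁻¹ : R) * hb = 1 := hbu.val_inv_mul
      calc (↑hbu.unit⁻¹ : R) * (z ^ τ * hb) + 0 * z ^ r
          = z ^ τ * ((↑hbu.unit⁻¹ : R) * hb) := by ring
        _ = z ^ τ := by rw [hinv, mul_one]

set_option maxHeartbeats 2000000 in
lemma stmt4_core (p m k : ℕ) (hp : Nat.Prime p) (hm : 1 ≤ m) (hk : 1 ≤ k)
    (F : Type) [Field F] [Fintype F] (hF : Fintype.card F = p ^ m)
    (r₁ k₄ k₅ : ℕ) (hk₄ : k₄ < r₁) (hk₅ : k₅ < r₁) (hr₁ : r₁ < p ^ k)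
    (p₄ p₅ : Sq F (p ^ k))
    (hp₄ : UnitOrZeroLift F (p ^ k) p₄) (hp₅ : UnitOrZeroLift F (p ^ k) p₅)
    (C : Ideal (Sq F (p ^ k)))
    (hC : C = Ideal.span
      { uS F (p ^ k) * (xS F (p ^ k) - 1) ^ r₁
          + uS F (p ^ k) ^ 2 * (xS F (p ^ k) - 1) ^ k₄ * p₄
          + uS F (p ^ k) ^ 3 * (xS F (p ^ k) - 1) ^ k₅ * p₅ })
    (hcase : r₁ ≤ p ^ k - r₁ + k₄)
    (τ₁ : ℕ) (h₁ : Sq F (p ^ k)) (hh₁ : UnitOrZeroLift F (p ^ k) h₁)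
    (heq : uS F (p ^ k) ^ 3 * ((xS F (p ^ k) - 1) ^ (p ^ k - r₁ + k₄ - r₁ + k₄) * p₄ ^ 2
        - (xS F (p ^ k) - 1) ^ (p ^ k - r₁ + k₅) * p₅)
      = uS F (p ^ k) ^ 3 * (xS F (p ^ k) - 1) ^ τ₁ * h₁)
    (t₃ : ℕ) (ht₃ : HasTorDeg F (p ^ k) 3 C t₃) :
    (IsUnitLift F (p ^ k) h₁ → t₃ = min r₁ τ₁) ∧ (h₁ = 0 → t₃ = r₁) := by
  haveI : Fact p.Prime := ⟨hp⟩
  haveI hchar : CharP F p := by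
    have h1 : CharP F (ringChar F) := ringChar.charP F
    have hcast : ((p ^ m : ℕ) : F) = 0 := by
      rw [← hF]
      exact FiniteField.cast_card_eq_zero F
    have hdvd : ringChar F ∣ p ^ m := (CharP.cast_eq_zero_iff F (ringChar F) (p ^ m)).mp hcast
    have hprime : (ringChar F).Prime := CharP.char_is_prime F (ringChar F)
    have : ringChar F = p :=
      (Nat.prime_dvd_prime_iff_eq hprime hp).mp (hprime.dvd_of_dvd_pow hdvd)
    rwa [this] at h1
  obtain ⟨q₄, hq₄⟩ : ∃ q, liftQS F (p ^ k) q = p₄ :=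
    ⟨muHom F (p ^ k) p₄, lift_mu_of_uoz hp₄⟩
  obtain ⟨q₅, hq₅⟩ : ∃ q, liftQS F (p ^ k) q = p₅ :=
    ⟨muHom F (p ^ k) p₅, lift_mu_of_uoz hp₅⟩
  obtain ⟨hbq, hhb⟩ : ∃ q, liftQS F (p ^ k) q = h₁ :=
    ⟨muHom F (p ^ k) h₁, lift_mu_of_uoz hh₁⟩
  -- convert generator
  have hC' : C = Ideal.span {uS F (p ^ k) * liftQS F (p ^ k) ((xQ F (p ^ k) - 1) ^ r₁)
      + uS F (p ^ k) ^ 2 * liftQS F (p ^ k) ((xQ F (p ^ k) - 1) ^ k₄ * q₄)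
      + uS F (p ^ k) ^ 3 * liftQS F (p ^ k) ((xQ F (p ^ k) - 1) ^ k₅ * q₅)} := by
    rw [hC]
    congr 1
    rw [← hq₄, ← hq₅]
    simp only [map_mul, map_pow, lift_z]
    ring
  -- convert heq to Q level
  have heq' : uS F (p ^ k) ^ 3
      * liftQS F (p ^ k) ((xQ F (p ^ k) - 1) ^ (p ^ k - r₁ + k₄ - r₁ + k₄) * q₄ ^ 2
          - (xQ F (p ^ k) - 1) ^ (p ^ k - r₁ + k₅) * q₅)
      = uS F (p ^ k) ^ 3 * liftQS F (p ^ k) ((xQ F (p ^ k) - 1) ^ τ₁ * hbq) := by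
    simp only [map_sub, map_mul, map_pow, map_one, lift_xQ, hq₄, hq₅, hhb]
    linear_combination heq
  have heqQ : (xQ F (p ^ k) - 1) ^ (p ^ k - r₁ + k₄ - r₁ + k₄) * q₄ ^ 2
      - (xQ F (p ^ k) - 1) ^ (p ^ k - r₁ + k₅) * q₅
      = (xQ F (p ^ k) - 1) ^ τ₁ * hbq := u3_inj _ _ heq'
  have htor := torset_main (p := p) (K := k) r₁ k₄ k₅ τ₁ hr₁ hcase q₄ q₅ hbq heqQ C hC'
  obtain ⟨ht₃n, ht₃span⟩ := ht₃
  have hspan : Ideal.span {(xQ F (p ^ k) - 1) ^ t₃}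
      = Ideal.span {(xQ F (p ^ k) - 1) ^ τ₁ * hbq, (xQ F (p ^ k) - 1) ^ r₁} :=
    SetLike.coe_injective (ht₃span.symm.trans htor)
  constructor
  · intro hUnit
    obtain ⟨q, hqu, hq⟩ := hUnit
    have hbq_eq : hbq = q := by
      have h2 : liftQS F (p ^ k) hbq = liftQS F (p ^ k) q := by rw [hhb, hq]
      have h3 := congrArg (muHom F (p ^ k)) h2
      rwa [mu_lift, mu_lift] at h3
    have hbu : IsUnit hbq := hbq_eq ▸ hqu
    rw [span_pair_pow_unit (xQ F (p ^ k) - 1) hbq hbu r₁ τ₁] at hspan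
    exact span_z_pow_inj (by omega : min r₁ τ₁ < p ^ k) ht₃n hspan
  · intro h0
    have hbq_eq : hbq = 0 := by
      have h2 := congrArg (muHom F (p ^ k)) hhb
      rwa [mu_lift, h0, map_zero] at h2
    rw [hbq_eq, mul_zero] at hspan
    have hzero_span : Ideal.span ({0, (xQ F (p ^ k) - 1) ^ r₁} : Set (Qq F (p ^ k)))
        = Ideal.span {(xQ F (p ^ k) - 1) ^ r₁} := Submodule.span_insert_zero
    rw [hzero_span] at hspan
    exact span_z_pow_inj hr₁ ht₃n hspan

/-- third torsional degree of `C = ⟨g₁⟩` in the case `n − r₁ + k₄ ≥ r₁`. -/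
theorem stmt_4 (p m k : ℕ) (hp : Nat.Prime p) (hm : 1 ≤ m) (hk : 1 ≤ k)
    (F : Type) [Field F] [Fintype F] (hF : Fintype.card F = p ^ m)
    (r₁ k₄ k₅ : ℕ) (hk₄ : k₄ < r₁) (hk₅ : k₅ < r₁) (hr₁ : r₁ < p ^ k)
    (p₄ p₅ : Sq F (p ^ k))
    (hp₄ : UnitOrZeroLift F (p ^ k) p₄) (hp₅ : UnitOrZeroLift F (p ^ k) p₅)
    (C : Ideal (Sq F (p ^ k)))
    (hC : C = Ideal.span
      { uS F (p ^ k) * (xS F (p ^ k) - 1) ^ r₁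
          + uS F (p ^ k) ^ 2 * (xS F (p ^ k) - 1) ^ k₄ * p₄
          + uS F (p ^ k) ^ 3 * (xS F (p ^ k) - 1) ^ k₅ * p₅ })
    (hcase : r₁ ≤ p ^ k - r₁ + k₄)
    (τ₁ : ℕ) (h₁ : Sq F (p ^ k)) (hh₁ : UnitOrZeroLift F (p ^ k) h₁)
    (heq : uS F (p ^ k) ^ 3 * ((xS F (p ^ k) - 1) ^ (p ^ k - r₁ + k₄ - r₁ + k₄) * p₄ ^ 2
        - (xS F (p ^ k) - 1) ^ (p ^ k - r₁ + k₅) * p₅)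
      = uS F (p ^ k) ^ 3 * (xS F (p ^ k) - 1) ^ τ₁ * h₁)
    (t₃ : ℕ) (ht₃ : HasTorDeg F (p ^ k) 3 C t₃) :
    (IsUnitLift F (p ^ k) h₁ → t₃ = min r₁ τ₁) ∧ (h₁ = 0 → t₃ = r₁) := by
  exact stmt4_core p m k hp hm hk F hF r₁ k₄ k₅ hk₄ hk₅ hr₁ p₄ p₅ hp₄ hp₅ C hC hcase
    τ₁ h₁ hh₁ heq t₃ ht₃


end
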